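/- Under the saturated marginal structural model setup, assume λ₀ is strictly positive on a set of positive Lebesgue measure and that β is bounded, and let β* ∈ ℝ satisfy h(β*) = 0. Then β* is a weighted time-average of β(·): there exists a measurable ω : [0,τ] → [0,∞) with 0 < ∫₀^τ ω(t)dt < ∞ such that β* · ∫₀^τ ω(t)dt = ∫₀^τ ω(t)β(t)dt; one may take ω(t) = (f₀(t)+f₁(t)) · ∫₀¹ v(β* + s(β(t)−β*), t) ds, where v(b,t) = e^b S₀(t)S₁(t)/(S₀(t)+e^b S₁(t))². -/

import Mathlib

open MeasureTheory Filter

/-- Potential-outcome survival function `S_a(t) = exp(-∫₀ᵗ e^{β(u)·a} λ₀(u) du)`. -/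
noncomputable def Ssurv (lam0 bet : ℝ → ℝ) (a t : ℝ) : ℝ :=
  Real.exp (-(∫ u in (0:ℝ)..t, Real.exp (bet u * a) * lam0 u))

/-- Potential-outcome density `f_a(t) = e^{β(t)·a} λ₀(t) S_a(t)`. -/
noncomputable def fdens (lam0 bet : ℝ → ℝ) (a t : ℝ) : ℝ :=
  Real.exp (bet t * a) * lam0 t * Ssurv lam0 bet a t

/-- `ℰ(b,t) = e^b S₁(t) / (S₀(t) + e^b S₁(t))`. -/
noncomputable def Efun (lam0 bet : ℝ → ℝ) (b t : ℝ) : ℝ :=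
  Real.exp b * Ssurv lam0 bet 1 t /
    (Ssurv lam0 bet 0 t + Real.exp b * Ssurv lam0 bet 1 t)

/-- Population full-data estimating function
`h(b) = ∫₀^τ (ℰ(β(t),t) - ℰ(b,t)) (f₀(t) + f₁(t)) dt`. -/
noncomputable def hfun (τ : ℝ) (lam0 bet : ℝ → ℝ) (b : ℝ) : ℝ :=
  ∫ t in (0:ℝ)..τ,
    (Efun lam0 bet (bet t) t - Efun lam0 bet b t) *
      (fdens lam0 bet 0 t + fdens lam0 bet 1 t)

private lemma my_hasDerivAt_logistic (c d : ℝ) (hc : 0 < c) (hd : 0 < d) (b : ℝ) :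
    HasDerivAt (fun b => Real.exp b * d / (c + Real.exp b * d))
      (Real.exp b * c * d / (c + Real.exp b * d) ^ 2) b := by
  have hden : c + Real.exp b * d ≠ 0 := by positivity
  have h1 : HasDerivAt (fun b => Real.exp b * d) (Real.exp b * d) b :=
    (Real.hasDerivAt_exp b).mul_const d
  have h2 : HasDerivAt (fun b => c + Real.exp b * d) (Real.exp b * d) b :=
    h1.const_add c
  have h := h1.div h2 hden
  refine h.congr_deriv ?_
  ring

private lemma my_cont_v (c d A B : ℝ) (hc : 0 < c) (hd : 0 < d) :
    Continuous fun s : ℝ =>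
      Real.exp (A + s * (B - A)) * c * d /
        (c + Real.exp (A + s * (B - A)) * d) ^ 2 := by
  have he : Continuous fun s : ℝ => Real.exp (A + s * (B - A)) := by continuity
  apply Continuous.div ((he.mul continuous_const).mul continuous_const)
    ((continuous_const.add (he.mul continuous_const)).pow 2)
  intro s
  show (c + Real.exp (A + s * (B - A)) * d) ^ 2 ≠ 0
  positivity

private lemma my_efun_diff (c d A B : ℝ) (hc : 0 < c) (hd : 0 < d) :
    Real.exp B * d / (c + Real.exp B * d) - Real.exp A * d / (c + Real.exp A * d)
      = (B - A) * ∫ s in (0:ℝ)..1,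
          Real.exp (A + s * (B - A)) * c * d /
            (c + Real.exp (A + s * (B - A)) * d) ^ 2 := by
  have hcont := my_cont_v c d A B hc hd
  have hderiv : ∀ s ∈ Set.uIcc (0:ℝ) 1, HasDerivAt
      (fun s => Real.exp (A + s * (B - A)) * d / (c + Real.exp (A + s * (B - A)) * d))
      ((B - A) * (Real.exp (A + s * (B - A)) * c * d /
        (c + Real.exp (A + s * (B - A)) * d) ^ 2)) s := by
    intro s _
    have haff : HasDerivAt (fun s : ℝ => A + s * (B - A)) (B - A) s := by
      simpa using ((hasDerivAt_id s).mul_const (B - A)).const_add A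
    have h := (my_hasDerivAt_logistic c d hc hd (A + s * (B - A))).comp s haff
    have e : (B - A) * (Real.exp (A + s * (B - A)) * c * d /
        (c + Real.exp (A + s * (B - A)) * d) ^ 2) = (Real.exp (A + s * (B - A)) * c * d /
        (c + Real.exp (A + s * (B - A)) * d) ^ 2) * (B - A) := mul_comm _ _
    rw [e]
    exact h
  have hint : IntervalIntegrable (fun s => (B - A) * (Real.exp (A + s * (B - A)) * c * d /
      (c + Real.exp (A + s * (B - A)) * d) ^ 2)) volume 0 1 :=
    (continuous_const.mul hcont).intervalIntegrable 0 1
  have hftc := intervalIntegral.integral_eq_sub_of_hasDerivAt hderiv hint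
  rw [intervalIntegral.integral_const_mul] at hftc
  simpa using hftc.symm

private lemma my_v_le (c d E : ℝ) (hc : 0 < c) (hd : 0 < d) :
    Real.exp E * c * d / (c + Real.exp E * d) ^ 2 ≤ 1 / 4 := by
  rw [div_le_iff₀ (by positivity)]
  nlinarith [sq_nonneg (c - Real.exp E * d), Real.exp_pos E]

private lemma my_meas_setInt {g : ℝ → ℝ} (hg : Measurable g)
    {S : ℝ → Set ℝ} (hS : MeasurableSet {p : ℝ × ℝ | p.2 ∈ S p.1})
    (hSm : ∀ t, MeasurableSet (S t)) :
    Measurable fun t => ∫ u in S t, g u := by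
  have hF : Measurable fun p : ℝ × ℝ => Set.indicator (S p.1) g p.2 := by
    have h : (fun p : ℝ × ℝ => Set.indicator (S p.1) g p.2)
        = {p : ℝ × ℝ | p.2 ∈ S p.1}.indicator (fun p => g p.2) := by
      ext p
      rfl
    rw [h]
    exact (hg.comp measurable_snd).indicator hS
  have h2 := (hF.stronglyMeasurable.integral_prod_right' (ν := volume)).measurable
  convert h2 using 2 with t
  rw [← integral_indicator (hSm t)]

private lemma my_meas_primitive {g : ℝ → ℝ} (hg : Measurable g) :
    Measurable fun t => ∫ u in (0:ℝ)..t, g u := by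
  have h1 : Measurable fun t => ∫ u in Set.Ioc (0:ℝ) t, g u := by
    refine my_meas_setInt hg ?_ (fun t => measurableSet_Ioc)
    exact (measurable_snd measurableSet_Ioi).inter
      (isClosed_le continuous_snd continuous_fst).measurableSet
  have h2 : Measurable fun t => ∫ u in Set.Ioc t (0:ℝ), g u := by
    refine my_meas_setInt hg ?_ (fun t => measurableSet_Ioc)
    exact ((isOpen_lt continuous_fst continuous_snd).measurableSet).inter
      (measurable_snd measurableSet_Iic)
  have h : (fun t => ∫ u in (0:ℝ)..t, g u)
      = fun t => (∫ u in Set.Ioc (0:ℝ) t, g u) - ∫ u in Set.Ioc t (0:ℝ), g u := by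
    funext t
    rw [intervalIntegral]
  rw [h]
  exact h1.sub h2

set_option maxHeartbeats 1000000 in
/-- The time-averaged log hazard ratio `β*` (a root of `h`) is a weighted time-average of
`β(·)`: there is a nonnegative measurable weight `ω` with `0 < ∫₀^τ ω < ∞` such that
`β* ∫₀^τ ω = ∫₀^τ ω β`, and one may take
`ω(t) = (f₀(t)+f₁(t)) ∫₀¹ v(β* + s(β(t)-β*), t) ds` with
`v(b,t) = e^b S₀(t) S₁(t)/(S₀(t)+e^b S₁(t))²`. -/
theorem beta_star_is_weighted_time_average
    (τ : ℝ) (hτ : 0 < τ) (lam0 bet : ℝ → ℝ) (bstar : ℝ)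
    (hlam_meas : Measurable lam0) (hbet_meas : Measurable bet)
    (hlam_nonneg : ∀ t, 0 ≤ lam0 t)
    (hlam_int : IntegrableOn lam0 (Set.Icc 0 τ))
    (hbetlam_int : IntegrableOn (fun t => Real.exp (bet t) * lam0 t) (Set.Icc 0 τ))
    (hpos : 0 < volume {t | t ∈ Set.Icc 0 τ ∧ 0 < lam0 t})
    (hbdd : ∃ K : ℝ, ∀ t, |bet t| ≤ K)
    (hroot : hfun τ lam0 bet bstar = 0) :
    ∃ ω : ℝ → ℝ, Measurable ω ∧ (∀ t, 0 ≤ ω t) ∧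
      IntegrableOn ω (Set.Ioc 0 τ) ∧
      (0 < ∫ t in (0:ℝ)..τ, ω t) ∧
      (bstar * ∫ t in (0:ℝ)..τ, ω t) = (∫ t in (0:ℝ)..τ, ω t * bet t) ∧
      ω = fun t => (fdens lam0 bet 0 t + fdens lam0 bet 1 t) *
        ∫ s in (0:ℝ)..1,
          Real.exp (bstar + s * (bet t - bstar)) * Ssurv lam0 bet 0 t * Ssurv lam0 bet 1 t /
            (Ssurv lam0 bet 0 t +
              Real.exp (bstar + s * (bet t - bstar)) * Ssurv lam0 bet 1 t) ^ 2 := by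
  obtain ⟨K, hK⟩ := hbdd
  -- basic positivity facts
  have hSpos : ∀ a t, 0 < Ssurv lam0 bet a t := fun a t => Real.exp_pos _
  have hSle : ∀ (a t : ℝ), 0 ≤ t → Ssurv lam0 bet a t ≤ 1 := by
    intro a t ht
    have hnn : (0:ℝ) ≤ ∫ u in (0:ℝ)..t, Real.exp (bet u * a) * lam0 u :=
      intervalIntegral.integral_nonneg ht fun u _ =>
        mul_nonneg (Real.exp_pos _).le (hlam_nonneg u)
    show Real.exp _ ≤ 1
    rw [Real.exp_le_one_iff]
    linarith
  have hf_nonneg : ∀ (a t : ℝ), 0 ≤ fdens lam0 bet a t := fun a t =>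
    mul_nonneg (mul_nonneg (Real.exp_pos _).le (hlam_nonneg t)) (hSpos a t).le
  -- the weight
  set I : ℝ → ℝ := fun t => ∫ s in (0:ℝ)..1,
      Real.exp (bstar + s * (bet t - bstar)) * Ssurv lam0 bet 0 t * Ssurv lam0 bet 1 t /
        (Ssurv lam0 bet 0 t +
          Real.exp (bstar + s * (bet t - bstar)) * Ssurv lam0 bet 1 t) ^ 2 with hI_def
  set ω : ℝ → ℝ := fun t => (fdens lam0 bet 0 t + fdens lam0 bet 1 t) * I t with hω_def
  have hIcont : ∀ t, Continuous fun s : ℝ =>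
      Real.exp (bstar + s * (bet t - bstar)) * Ssurv lam0 bet 0 t * Ssurv lam0 bet 1 t /
        (Ssurv lam0 bet 0 t +
          Real.exp (bstar + s * (bet t - bstar)) * Ssurv lam0 bet 1 t) ^ 2 := fun t =>
    my_cont_v _ _ bstar (bet t) (hSpos 0 t) (hSpos 1 t)
  have hI_nonneg : ∀ t, 0 ≤ I t := by
    intro t
    refine intervalIntegral.integral_nonneg zero_le_one fun s _ => ?_
    have h0 := hSpos 0 t
    have h1 := hSpos 1 t
    exact div_nonneg (mul_nonneg (mul_nonneg (Real.exp_pos _).le h0.le) h1.le)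
      (pow_nonneg (add_nonneg h0.le (mul_nonneg (Real.exp_pos _).le h1.le)) 2)
  have hI_le : ∀ t, I t ≤ 1 / 4 := by
    intro t
    have hb : ∀ s ∈ Set.Icc (0:ℝ) 1,
        Real.exp (bstar + s * (bet t - bstar)) * Ssurv lam0 bet 0 t * Ssurv lam0 bet 1 t /
          (Ssurv lam0 bet 0 t +
            Real.exp (bstar + s * (bet t - bstar)) * Ssurv lam0 bet 1 t) ^ 2 ≤ 1 / 4 :=
      fun s _ => my_v_le _ _ _ (hSpos 0 t) (hSpos 1 t)
    calc I t ≤ ∫ _ in (0:ℝ)..1, (1/4 : ℝ) :=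
          intervalIntegral.integral_mono_on zero_le_one
            ((hIcont t).intervalIntegrable 0 1) intervalIntegrable_const hb
      _ = 1 / 4 := by simp
  have hω_nonneg : ∀ t, 0 ≤ ω t := fun t =>
    mul_nonneg (add_nonneg (hf_nonneg 0 t) (hf_nonneg 1 t)) (hI_nonneg t)
  -- measurability
  have hmeasS : ∀ a : ℝ, Measurable fun t => Ssurv lam0 bet a t := by
    intro a
    exact (Real.measurable_exp.comp
      (my_meas_primitive ((hbet_meas.mul_const a).exp.mul hlam_meas)).neg)
  have hmeasf : ∀ a : ℝ, Measurable fun t => fdens lam0 bet a t := fun a =>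
    ((hbet_meas.mul_const a).exp.mul hlam_meas).mul (hmeasS a)
  have hmeasI : Measurable I := by
    have hF : Measurable fun p : ℝ × ℝ =>
        Real.exp (bstar + p.2 * (bet p.1 - bstar)) * Ssurv lam0 bet 0 p.1 *
          Ssurv lam0 bet 1 p.1 /
          (Ssurv lam0 bet 0 p.1 +
            Real.exp (bstar + p.2 * (bet p.1 - bstar)) * Ssurv lam0 bet 1 p.1) ^ 2 := by
      have hexp : Measurable fun p : ℝ × ℝ => Real.exp (bstar + p.2 * (bet p.1 - bstar)) :=
        (measurable_const.add (measurable_snd.mul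
          ((hbet_meas.comp measurable_fst).sub measurable_const))).exp
      have hS0 : Measurable fun p : ℝ × ℝ => Ssurv lam0 bet 0 p.1 :=
        (hmeasS 0).comp measurable_fst
      have hS1 : Measurable fun p : ℝ × ℝ => Ssurv lam0 bet 1 p.1 :=
        (hmeasS 1).comp measurable_fst
      exact ((hexp.mul hS0).mul hS1).div ((hS0.add (hexp.mul hS1)).pow_const 2)
    have h2 := (hF.stronglyMeasurable.integral_prod_right'
      (ν := volume.restrict (Set.Ioc 0 1))).measurable
    have heq : I = fun t => ∫ s in Set.Ioc (0:ℝ) 1,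
        Real.exp (bstar + s * (bet t - bstar)) * Ssurv lam0 bet 0 t * Ssurv lam0 bet 1 t /
          (Ssurv lam0 bet 0 t +
            Real.exp (bstar + s * (bet t - bstar)) * Ssurv lam0 bet 1 t) ^ 2 := by
      funext t
      rw [hI_def]
      exact intervalIntegral.integral_of_le zero_le_one
    rw [heq]
    exact h2
  have hmeasω : Measurable ω := ((hmeasf 0).add (hmeasf 1)).mul hmeasI
  -- integrability of ω
  have hgint : IntegrableOn (fun t => (lam0 t + Real.exp (bet t) * lam0 t) * (1/4))
      (Set.Ioc 0 τ) :=
    ((hlam_int.mono_set Set.Ioc_subset_Icc_self).add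
      (hbetlam_int.mono_set Set.Ioc_subset_Icc_self)).mul_const _
  have hfbound : ∀ t ∈ Set.Ioc (0:ℝ) τ,
      fdens lam0 bet 0 t + fdens lam0 bet 1 t ≤ lam0 t + Real.exp (bet t) * lam0 t := by
    intro t ht
    have h0 : fdens lam0 bet 0 t ≤ lam0 t := by
      show Real.exp (bet t * 0) * lam0 t * Ssurv lam0 bet 0 t ≤ lam0 t
      rw [mul_zero, Real.exp_zero, one_mul]
      exact mul_le_of_le_one_right (hlam_nonneg t) (hSle 0 t ht.1.le)
    have h1 : fdens lam0 bet 1 t ≤ Real.exp (bet t) * lam0 t := by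
      show Real.exp (bet t * 1) * lam0 t * Ssurv lam0 bet 1 t ≤ _
      rw [mul_one]
      exact mul_le_of_le_one_right
        (mul_nonneg (Real.exp_pos _).le (hlam_nonneg t)) (hSle 1 t ht.1.le)
    linarith
  have hωbound : ∀ t ∈ Set.Ioc (0:ℝ) τ,
      ω t ≤ (lam0 t + Real.exp (bet t) * lam0 t) * (1/4) := by
    intro t ht
    calc ω t ≤ (fdens lam0 bet 0 t + fdens lam0 bet 1 t) * (1/4) :=
          mul_le_mul_of_nonneg_left (hI_le t)
            (add_nonneg (hf_nonneg 0 t) (hf_nonneg 1 t))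
      _ ≤ (lam0 t + Real.exp (bet t) * lam0 t) * (1/4) :=
          mul_le_mul_of_nonneg_right (hfbound t ht) (by norm_num)
  have hωint : IntegrableOn ω (Set.Ioc 0 τ) := by
    refine hgint.mono' hmeasω.aestronglyMeasurable ?_
    rw [ae_restrict_iff' measurableSet_Ioc]
    refine ae_of_all _ fun t ht => ?_
    rw [Real.norm_of_nonneg (hω_nonneg t)]
    exact hωbound t ht
  have hωbetint : IntegrableOn (fun t => ω t * bet t) (Set.Ioc 0 τ) := by
    refine (hωint.mul_const K).mono' (hmeasω.mul hbet_meas).aestronglyMeasurable ?_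
    refine ae_of_all _ fun t => ?_
    rw [norm_mul, Real.norm_of_nonneg (hω_nonneg t)]
    exact mul_le_mul_of_nonneg_left ((Real.norm_eq_abs _ ▸ hK t)) (hω_nonneg t)
  -- key pointwise identity
  have hkey : ∀ t, (Efun lam0 bet (bet t) t - Efun lam0 bet bstar t) *
      (fdens lam0 bet 0 t + fdens lam0 bet 1 t) = (bet t - bstar) * ω t := by
    intro t
    have hd : Efun lam0 bet (bet t) t - Efun lam0 bet bstar t = (bet t - bstar) * I t :=
      my_efun_diff (Ssurv lam0 bet 0 t) (Ssurv lam0 bet 1 t) bstar (bet t)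
        (hSpos 0 t) (hSpos 1 t)
    rw [hd, hω_def]
    ring
  have hiω : IntervalIntegrable ω volume 0 τ :=
    (intervalIntegrable_iff_integrableOn_Ioc_of_le hτ.le).mpr hωint
  have hiωb : IntervalIntegrable (fun t => ω t * bet t) volume 0 τ :=
    (intervalIntegrable_iff_integrableOn_Ioc_of_le hτ.le).mpr hωbetint
  have hhfun : (∫ t in (0:ℝ)..τ, (bet t - bstar) * ω t) = 0 := by
    have h : (∫ t in (0:ℝ)..τ, (bet t - bstar) * ω t) = hfun τ lam0 bet bstar := by
      unfold hfun
      exact intervalIntegral.integral_congr fun t _ => (hkey t).symm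
    rw [h, hroot]
  have hsplit : (∫ t in (0:ℝ)..τ, (bet t - bstar) * ω t)
      = (∫ t in (0:ℝ)..τ, ω t * bet t) - bstar * ∫ t in (0:ℝ)..τ, ω t := by
    rw [← intervalIntegral.integral_const_mul,
      ← intervalIntegral.integral_sub hiωb (hiω.const_mul bstar)]
    exact intervalIntegral.integral_congr fun t _ => by ring
  -- positivity of the total weight
  have hωpos : ∀ t, 0 < lam0 t → 0 < ω t := by
    intro t hl
    have hIpos : 0 < I t := by
      refine intervalIntegral.intervalIntegral_pos_of_pos_on
        ((hIcont t).intervalIntegrable 0 1) (fun s _ => ?_) zero_lt_one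
      have h0 := hSpos 0 t
      have h1 := hSpos 1 t
      exact div_pos (mul_pos (mul_pos (Real.exp_pos _) h0) h1)
        (pow_pos (add_pos h0 (mul_pos (Real.exp_pos _) h1)) 2)
    have hfpos : 0 < fdens lam0 bet 0 t :=
      mul_pos (mul_pos (Real.exp_pos _) hl) (hSpos 0 t)
    exact mul_pos (add_pos_of_pos_of_nonneg hfpos (hf_nonneg 1 t)) hIpos
  have hintpos : 0 < ∫ t in (0:ℝ)..τ, ω t := by
    rw [intervalIntegral.integral_of_le hτ.le]
    rw [setIntegral_pos_iff_support_of_nonneg_ae (ae_of_all _ hω_nonneg) hωint]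
    have hsub : {t | t ∈ Set.Icc 0 τ ∧ 0 < lam0 t} \ {0}
        ⊆ Function.support ω ∩ Set.Ioc 0 τ := by
      rintro t ⟨⟨⟨ht0, htτ⟩, hl⟩, hne⟩
      refine ⟨(hωpos t hl).ne', ?_, htτ⟩
      exact lt_of_le_of_ne ht0 (Ne.symm (Set.mem_singleton_iff.not.mp hne))
    calc (0:ENNReal) < volume {t | t ∈ Set.Icc 0 τ ∧ 0 < lam0 t} := hpos
      _ = volume ({t | t ∈ Set.Icc 0 τ ∧ 0 < lam0 t} \ {0}) :=
          (measure_diff_null (measure_singleton 0)).symm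
      _ ≤ volume (Function.support ω ∩ Set.Ioc 0 τ) := measure_mono hsub
  refine ⟨ω, hmeasω, hω_nonneg, hωint, hintpos, ?_, rfl⟩
  have := hsplit ▸ hhfun
  linarith
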